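/- Let n ≥ 4 and 0 < ε < 1, and consider the star Minimum Multicut instance I(n,ε): vertices s₁,…,s_{n−1}, u; terminal pairs all {s_i, s_j} with i ≠ j; edges (u,s₁) of weight n−2−ε/2 and (u,s_i) of weight 1 for 2 ≤ i ≤ n−1. Then the minimum weight of a multicut equals n−2, while the edge-length assignment ℓ(u,s_i) = 1/2 for all i is a feasible solution of the metric LP relaxation (every path between two terminals has total length at least 1) whose objective value equals n−2−ε/4 < n−2. Hence the LP relaxation of Minimum Multicut is not integral on this (n−2−ε)-stable instance. -/
import Mathlib


open Finset

/-- The star graph of the Minimum Multicut instance `I(n, ε)`: vertices are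
`s₁, …, s_{n−1}` (the elements `some i`, where `s₁` corresponds to `i = 0`) together
with the center `u` (the element `none`); the edges are exactly the pairs `(u, s_i)`. -/
def starGraph (n : ℕ) : SimpleGraph (Option (Fin (n - 1))) :=
  SimpleGraph.fromRel (fun x y => x = none ∨ y = none)

/-- Edge weights of the instance `I(n, ε)`: the edge `(u, s₁)` has weight `n − 2 − ε/2`
and the edges `(u, s_i)`, `2 ≤ i ≤ n − 1`, have weight `1`; all other pairs get `0`. -/
noncomputable def starWeight (n : ℕ) (ε : ℝ) :
    Option (Fin (n - 1)) → Option (Fin (n - 1)) → ℝ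
  | none, some i => if (i : ℕ) = 0 then (n : ℝ) - 2 - ε / 2 else 1
  | some i, none => if (i : ℕ) = 0 then (n : ℝ) - 2 - ε / 2 else 1
  | _, _ => 0

/-- The total weight of a set `F` of (unordered) edges of the instance `I(n, ε)`
(the ordered double sum counts every pair twice). -/
noncomputable def starEdgesWeight (n : ℕ) (ε : ℝ)
    (F : Finset (Sym2 (Option (Fin (n - 1))))) : ℝ :=
  (∑ x, ∑ y, if s(x, y) ∈ F then starWeight n ε x y else 0) / 2

/-- `E'` is a multicut of the instance `I(n, ε)`: a set of edges of the star graph whose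
removal disconnects every pair of distinct terminals `s_i, s_j`. -/
def IsStarMulticut (n : ℕ) (E' : Finset (Sym2 (Option (Fin (n - 1))))) : Prop :=
  ↑E' ⊆ (starGraph n).edgeSet ∧
  ∀ i j : Fin (n - 1), i ≠ j →
    ¬ ((starGraph n).deleteEdges ↑E').Reachable (some i) (some j)

/-- The multicut `E* = {(u, s_i) : 2 ≤ i ≤ n − 1}`. -/
noncomputable def starEstar (n : ℕ) : Finset (Sym2 (Option (Fin (n - 1)))) :=
  have := Classical.propDecidable
  Finset.univ.filter (fun e => ∃ i : Fin (n - 1), (i : ℕ) ≠ 0 ∧ e = s(none, some i))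

-- auxiliary lemmas

lemma mem_starEstar (n : ℕ) (j : Fin (n-1)) :
    s(none, some j) ∈ starEstar n ↔ (j:ℕ) ≠ 0 := by
  simp [starEstar, Sym2.eq, Sym2.rel_iff']

lemma starGraph_adj (n : ℕ) (a b : Option (Fin (n-1))) :
    (starGraph n).Adj a b ↔ a ≠ b ∧ (a = none ∨ b = none) := by
  simp only [starGraph, SimpleGraph.fromRel_adj]
  tauto

lemma dsum_option {V : Type*} [Fintype V] (f : Option V → Option V → ℝ)
    (h0 : f none none = 0) (hss : ∀ i j, f (some i) (some j) = 0) :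
    ∑ x, ∑ y, f x y = ∑ i, f none (some i) + ∑ i, f (some i) none := by
  rw [Fintype.sum_option]
  have h1 : ∀ x, ∑ y, f x y = f x none + ∑ j, f x (some j) := fun x => Fintype.sum_option _
  simp only [h1, h0, hss, Finset.sum_const, smul_zero, add_zero, zero_add]
  try ring

lemma sum_w (n : ℕ) (hn : 4 ≤ n) (W : ℝ) :
    ∑ i : Fin (n-1), (if (i : ℕ) = 0 then W else (1:ℝ)) = W + ((n : ℝ) - 2) := by
  haveI : NeZero (n - 1) := ⟨by omega⟩
  have h1 : ∀ i : Fin (n-1), (if (i : ℕ) = 0 then W else (1:ℝ)) =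
      (if i = (0 : Fin (n-1)) then W - 1 else 0) + 1 := by
    intro i
    by_cases h : i = 0
    · simp [h]
    · rw [if_neg h, if_neg (fun hv => h (Fin.ext (by simpa using hv)))]; ring
  simp only [h1]
  rw [Finset.sum_add_distrib, Finset.sum_ite_eq' Finset.univ (0 : Fin (n-1)) (fun _ => W - 1)]
  have : ((n - 1 : ℕ) : ℝ) = (n : ℝ) - 1 := by
    rw [Nat.cast_sub (by omega)]; norm_num
  simp [Finset.card_univ, this]
  ring


/-- For `n ≥ 4` and `0 < ε < 1`, in the star Minimum Multicut instance
`I(n, ε)` the minimum weight of a multicut equals `n − 2`, while the edge-length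
assignment `ℓ ≡ 1/2` is a feasible solution of the metric LP relaxation (nonnegative
lengths, and every path between two distinct terminals has total length at least `1`)
whose objective value equals `n − 2 − ε/4 < n − 2`.  Hence the LP relaxation of Minimum
Multicut is not integral on this `(n − 2 − ε)`-stable instance. -/
theorem stmt16 (n : ℕ) (hn : 4 ≤ n) (ε : ℝ) (hε0 : 0 < ε) (hε1 : ε < 1) :
    IsStarMulticut n (starEstar n) ∧
    starEdgesWeight n ε (starEstar n) = (n : ℝ) - 2 ∧
    (∀ E' : Finset (Sym2 (Option (Fin (n - 1)))), IsStarMulticut n E' →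
      (n : ℝ) - 2 ≤ starEdgesWeight n ε E') ∧
    (∀ e : Sym2 (Option (Fin (n - 1))), 0 ≤ (fun _ : Sym2 (Option (Fin (n - 1))) => (1 : ℝ) / 2) e) ∧
    (∀ i j : Fin (n - 1), i ≠ j →
      ∀ p : (starGraph n).Walk (some i) (some j),
        1 ≤ (p.edges.map (fun _ : Sym2 (Option (Fin (n - 1))) => (1 : ℝ) / 2)).sum) ∧
    (∑ x, ∑ y, starWeight n ε x y *
        (fun _ : Sym2 (Option (Fin (n - 1))) => (1 : ℝ) / 2) s(x, y)) / 2 =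
      (n : ℝ) - 2 - ε / 4 ∧
    (n : ℝ) - 2 - ε / 4 < (n : ℝ) - 2 := by
  have hn3 : ((n:ℝ)) ≥ 4 := by exact_mod_cast hn
  set W : ℝ := (n : ℝ) - 2 - ε / 2 with hW
  have hW1 : 1 ≤ W := by rw [hW]; linarith
  have hcast : ((n - 1 - 1 : ℕ) : ℝ) = (n : ℝ) - 2 := by
    rw [show n - 1 - 1 = n - 2 by omega, Nat.cast_sub (by omega)]; norm_num
  have hdsum : ∀ F : Finset (Sym2 (Option (Fin (n - 1)))),
      starEdgesWeight n ε F =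
      ∑ i : Fin (n-1), (if s(none, some i) ∈ F then (if (i:ℕ) = 0 then W else 1) else 0) := by
    intro F
    unfold starEdgesWeight
    rw [dsum_option _ (by simp [starWeight]) (by intro i j; simp [starWeight])]
    have hsym : ∀ i : Fin (n-1),
        (if s(some i, none) ∈ F then starWeight n ε (some i) none else 0) =
        (if s(none, some i) ∈ F then (if (i:ℕ) = 0 then W else 1) else 0) := by
      intro i; rw [Sym2.eq_swap]; rfl
    have hsym2 : ∀ i : Fin (n-1),
        (if s(none, some i) ∈ F then starWeight n ε none (some i) else 0) =
        (if s(none, some i) ∈ F then (if (i:ℕ) = 0 then W else 1) else 0) := by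
      intro i; rfl
    simp only [hsym, hsym2]
    ring
  refine ⟨⟨?_, ?_⟩, ?_, ?_, ?_, ?_, ?_, ?_⟩
  · -- starEstar ⊆ edgeSet
    intro e he
    simp only [starEstar, Finset.coe_filter, Set.mem_setOf_eq, Finset.mem_coe,
      Finset.mem_filter] at he
    obtain ⟨-, i, hi, rfl⟩ := he
    rw [SimpleGraph.mem_edgeSet, starGraph_adj]
    exact ⟨by simp, Or.inl rfl⟩
  · -- starEstar is a multicut
    have key : ∀ i j : Fin (n-1), (i:ℕ) ≠ 0 → i ≠ j →
        ¬ ((starGraph n).deleteEdges ↑(starEstar n)).Reachable (some i) (some j) := by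
      intro i j hi hij ⟨p⟩
      cases p with
      | nil => exact hij rfl
      | cons h q =>
        rename_i b
        rw [SimpleGraph.deleteEdges_adj] at h
        obtain ⟨hadj, hne⟩ := h
        rw [starGraph_adj] at hadj
        have hb : b = none := by rcases hadj.2 with h' | h' <;> simp_all
        subst hb
        exact hne (by rw [Sym2.eq_swap, Finset.mem_coe, mem_starEstar]; exact hi)
    intro i j hij
    by_cases hi : (i:ℕ) = 0
    · have hj : (j:ℕ) ≠ 0 := fun hj => hij (Fin.ext (by omega))
      intro hr
      exact key j i hj (Ne.symm hij) hr.symm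
    · exact key i j hi hij
  · -- weight of starEstar = n - 2
    rw [hdsum]
    have : ∀ i : Fin (n-1),
        (if s(none, some i) ∈ starEstar n then (if (i:ℕ) = 0 then W else 1) else 0) =
        (if (i:ℕ) = 0 then 0 else (1:ℝ)) := by
      intro i
      by_cases h : (i:ℕ) = 0 <;> simp [mem_starEstar, h]
    simp only [this]
    have := sum_w n hn 0
    -- ∑ if i=0 then 0 else 1 = 0 + (n-2)
    rw [this]; ring
  · -- lower bound for multicuts
    intro E' ⟨hsub, hcut⟩
    haveI : Nonempty (Fin (n-1)) := ⟨⟨0, by omega⟩⟩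
    classical
    rw [hdsum]
    set T : Finset (Fin (n-1)) := Finset.univ.filter (fun i => s(none, some i) ∉ E') with hT
    have hclaim : ∀ i j : Fin (n-1), i ≠ j →
        s(none, some i) ∈ E' ∨ s(none, some j) ∈ E' := by
      intro i j hij
      by_contra hc
      push_neg at hc
      apply hcut i j hij
      have h1 : ((starGraph n).deleteEdges ↑E').Adj (some i) none := by
        rw [SimpleGraph.deleteEdges_adj, starGraph_adj]
        exact ⟨⟨by simp, Or.inr rfl⟩, by rw [Sym2.eq_swap]; exact hc.1⟩
      have h2 : ((starGraph n).deleteEdges ↑E').Adj none (some j) := by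
        rw [SimpleGraph.deleteEdges_adj, starGraph_adj]
        exact ⟨⟨by simp, Or.inl rfl⟩, hc.2⟩
      exact ⟨SimpleGraph.Walk.cons h1 (SimpleGraph.Walk.cons h2 SimpleGraph.Walk.nil)⟩
    have hTcard : ∃ m, T ⊆ {m} := by
      rw [← Finset.card_le_one_iff_subset_singleton, Finset.card_le_one]
      intro a ha b hb
      by_contra hab
      simp only [hT, Finset.mem_filter] at ha hb
      rcases hclaim a b hab with h | h
      · exact ha.2 h
      · exact hb.2 h
    obtain ⟨m, hm⟩ := hTcard
    have hsplit : ∀ i : Fin (n-1),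
        (if s(none, some i) ∈ E' then (if (i:ℕ) = 0 then W else 1) else 0) =
        (if (i:ℕ) = 0 then W else 1) - (if i ∈ T then (if (i:ℕ) = 0 then W else 1) else 0) := by
      intro i
      simp only [hT, Finset.mem_filter, Finset.mem_univ, true_and]
      by_cases h : s(none, some i) ∈ E' <;> simp [h]
    simp only [hsplit]
    rw [Finset.sum_sub_distrib, sum_w n hn W]
    have hwpos : ∀ i : Fin (n-1), (0:ℝ) ≤ (if (i:ℕ) = 0 then W else 1) := by
      intro i
      split
      · linarith
      · norm_num
    have hTsum : ∑ i : Fin (n-1), (if i ∈ T then (if (i:ℕ) = 0 then W else 1) else 0) ≤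
        (if (m:ℕ) = 0 then W else 1) := by
      rw [Finset.sum_ite_mem, Finset.univ_inter]
      calc ∑ i ∈ T, (if (i:ℕ) = 0 then W else 1)
          ≤ ∑ i ∈ ({m} : Finset (Fin (n-1))), (if (i:ℕ) = 0 then W else 1) :=
            Finset.sum_le_sum_of_subset_of_nonneg hm (fun i _ _ => hwpos i)
        _ = (if (m:ℕ) = 0 then W else 1) := Finset.sum_singleton _ _
    have hmW : (if (m:ℕ) = 0 then W else 1) ≤ W := by
      split
      · exact le_rfl
      · exact hW1
    linarith
  · intro e; norm_num
  · -- feasibility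
    intro i j hij p
    have hlen : 2 ≤ p.length := by
      cases p with
      | nil => exact absurd rfl hij
      | cons h q =>
        cases q with
        | nil =>
          rw [starGraph_adj] at h
          rcases h.2 with h' | h' <;> simp_all
        | cons h' q' => simp [SimpleGraph.Walk.length_cons]
    have : (p.edges.map (fun _ : Sym2 (Option (Fin (n - 1))) => (1 : ℝ) / 2)).sum
        = p.length * (1/2 : ℝ) := by
      rw [List.map_const', List.sum_replicate, SimpleGraph.Walk.length_edges,
        nsmul_eq_mul]
    rw [this]
    have : (2:ℝ) ≤ p.length := by exact_mod_cast hlen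
    linarith
  · -- LP objective value
    rw [dsum_option _ (by simp [starWeight]) (by intro i j; simp [starWeight])]
    have h1 : ∀ i : Fin (n-1), starWeight n ε none (some i) * (1/2 : ℝ) =
        (if (i:ℕ) = 0 then W else 1) * (1/2) := fun i => rfl
    have h2 : ∀ i : Fin (n-1), starWeight n ε (some i) none * (1/2 : ℝ) =
        (if (i:ℕ) = 0 then W else 1) * (1/2) := fun i => rfl
    simp only [h1, h2, ← Finset.sum_mul]
    rw [sum_w n hn W]
    rw [hW]; ring
  · linarith
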